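/- Let v be a nonnegative random variable with continuous distribution F, let p, q ≥ 0 with q ≤ p, let n ≥ m ≥ 1, and set r = p - (ε/n)·q for ε ∈ (0,1). Suppose P(v ≥ q) = 1/m and E[v | v ≥ q] = q†. Then E[(v - r)·1{v ≥ r}] ≤ (1+ε)·q†/m, where additionally q ≤ q† and P(v ≥ p) ≤ P(v ≥ q). -/

import Mathlib

open MeasureTheory

/-- Bad-state per-round utility upper bound: with `r = p - (ε/n)·q`, `q ≤ p`,
`P(X ≥ q) = 1/m`, `q† = E[X | X ≥ q]` (so `q† = m·E[X·1{X ≥ q}]`) and `q ≤ q†`,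
we have `E[(X - r)·1{X ≥ r}] ≤ (1+ε)·q†/m`. -/
theorem stmt7 {Ω : Type*} [MeasurableSpace Ω] (μ : Measure Ω) [IsProbabilityMeasure μ]
    (X : Ω → ℝ) (hX : ∀ᵐ ω ∂μ, 0 ≤ X ω) (hint : Integrable X μ)
    (p q qd : ℝ) (hq0 : 0 ≤ q) (hqp : q ≤ p)
    (n m : ℕ) (hm : 1 ≤ m) (hmn : m ≤ n)
    (ε : ℝ) (hε : ε ∈ Set.Ioo (0 : ℝ) 1)
    (r : ℝ) (hr : r = p - ε / n * q)
    (hquant : μ {ω | q ≤ X ω} = ENNReal.ofReal (1 / m))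
    (hqd : qd = m * ∫ ω in {ω | q ≤ X ω}, X ω ∂μ)
    (hqqd : q ≤ qd) :
    ∫ ω in {ω | r ≤ X ω}, (X ω - r) ∂μ ≤ (1 + ε) * qd / m := by
  obtain ⟨hε0, hε1⟩ := hε
  have hn1 : (1:ℕ) ≤ n := hm.trans hmn
  have hnpos : (0:ℝ) < n := by exact_mod_cast hn1
  have hmpos : (0:ℝ) < m := by exact_mod_cast hm
  have hmn' : (m:ℝ) ≤ n := by exact_mod_cast hmn
  have hεn : ε / n ≤ 1 := by
    rw [div_le_one hnpos]
    exact hε1.le.trans (by exact_mod_cast hn1)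
  have hεn0 : 0 ≤ ε / n * q := by positivity
  have hr0 : 0 ≤ r := by
    have : ε / n * q ≤ 1 * q := mul_le_mul_of_nonneg_right hεn hq0
    rw [hr]; nlinarith
  have hrp : r ≤ p := by rw [hr]; linarith
  set g := hint.1.mk X with hg
  have hgm : StronglyMeasurable g := hint.1.stronglyMeasurable_mk
  have hXg : X =ᵐ[μ] g := hint.1.ae_eq_mk
  have hgint : Integrable g μ := hint.congr hXg
  have hg0 : ∀ᵐ ω ∂μ, 0 ≤ g ω := by
    filter_upwards [hX, hXg] with ω h1 h2
    rw [← h2]; exact h1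
  have hseteq : ∀ c : ℝ, {ω | c ≤ X ω} =ᵐ[μ] {ω | c ≤ g ω} := by
    intro c
    filter_upwards [hXg] with ω h
    show (c ≤ X ω) = (c ≤ g ω); rw [h]
  have hmeas : ∀ c : ℝ, MeasurableSet {ω | c ≤ g ω} :=
    fun c => measurableSet_le measurable_const hgm.measurable
  set Sp := {ω | p ≤ g ω} with hSp
  set Sr := {ω | r ≤ g ω} with hSr
  set Sq := {ω | q ≤ g ω} with hSq
  have hSpSr : Sp ⊆ Sr := fun ω h => le_trans hrp h
  have hSpSq : Sp ⊆ Sq := fun ω h => le_trans hqp h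
  have key : ∫ ω in {ω | r ≤ X ω}, (X ω - r) ∂μ = ∫ ω in Sr, (g ω - r) ∂μ := by
    rw [setIntegral_congr_set (hseteq r)]
    exact integral_congr_ae (ae_restrict_of_ae (hXg.mono fun ω h => by dsimp only; rw [h]))
  have hqdI : ∫ ω in Sq, g ω ∂μ = qd / m := by
    have e1 : ∫ ω in {ω | q ≤ X ω}, X ω ∂μ = ∫ ω in Sq, g ω ∂μ := by
      rw [setIntegral_congr_set (hseteq q)]
      exact integral_congr_ae (ae_restrict_of_ae hXg)
    rw [← e1, hqd]
    field_simp
  have hunion : Sr = Sp ∪ (Sr \ Sp) := (Set.union_diff_cancel hSpSr).symm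
  have hint1 : IntegrableOn (fun ω => g ω - r) Sp μ :=
    (hgint.sub (integrable_const r)).integrableOn
  have hint2 : IntegrableOn (fun ω => g ω - r) (Sr \ Sp) μ :=
    (hgint.sub (integrable_const r)).integrableOn
  rw [key, hunion, setIntegral_union disjoint_sdiff_self_right
    ((hmeas r).diff (hmeas p)) hint1 hint2]
  have hqd0 : 0 ≤ qd := hq0.trans hqqd
  have hb1 : ∫ ω in Sp, (g ω - r) ∂μ ≤ qd / m := by
    have h1 : ∫ ω in Sp, (g ω - r) ∂μ ≤ ∫ ω in Sp, g ω ∂μ :=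
      setIntegral_mono_on hint1 hgint.integrableOn (hmeas p) (fun ω _ => by linarith)
    have h2 : ∫ ω in Sp, g ω ∂μ ≤ ∫ ω in Sq, g ω ∂μ :=
      setIntegral_mono_set hgint.integrableOn (ae_restrict_of_ae hg0) (HasSubset.Subset.eventuallyLE hSpSq)
    linarith [hqdI ▸ h2]
  have hb2 : ∫ ω in Sr \ Sp, (g ω - r) ∂μ ≤ ε * qd / m := by
    have h1 : ∫ ω in Sr \ Sp, (g ω - r) ∂μ ≤ ∫ _ω in Sr \ Sp, (p - r) ∂μ := by
      refine setIntegral_mono_on hint2 (integrableOn_const (measure_lt_top _ _).ne)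
        ((hmeas r).diff (hmeas p)) (fun ω hω => ?_)
      have : g ω < p := not_le.mp hω.2
      linarith
    have h2 : ∫ _ω in Sr \ Sp, (p - r) ∂μ = (μ (Sr \ Sp)).toReal * (p - r) := by
      rw [setIntegral_const, smul_eq_mul, measureReal_def]
    have h3 : (μ (Sr \ Sp)).toReal ≤ 1 := by
      have := prob_le_one (μ := μ) (s := Sr \ Sp)
      simpa using ENNReal.toReal_mono (by simp) this
    have hpr : p - r = ε / n * q := by rw [hr]; ring
    have h4 : ε / n * q ≤ ε / m * q := by
      gcongr
    have h5 : ε / m * q ≤ ε * qd / m := by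
      rw [div_mul_eq_mul_div]
      gcongr
    calc ∫ ω in Sr \ Sp, (g ω - r) ∂μ ≤ (μ (Sr \ Sp)).toReal * (p - r) := h1.trans h2.le
      _ ≤ 1 * (p - r) := by
          have : 0 ≤ p - r := by linarith
          exact mul_le_mul_of_nonneg_right h3 this
      _ = ε / n * q := by rw [one_mul, hpr]
      _ ≤ ε * qd / m := h4.trans h5
  have : (1 + ε) * qd / m = qd / m + ε * qd / m := by ring
  linarith
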